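/- Let δ > 0, c₀ > 0, C₀ > 0, and let F : [0, ∞) → [0, ∞) be nondecreasing and satisfy, for all 0 < t < s, F(t) ≤ (c₀ δ/(s−t))² F(s) + C₀((s−t)² + δ²) s²/δ. Suppose moreover F(s) ≤ M for all s. Then there is a constant C depending only on c₀, C₀ (not on δ or M) such that, provided 4c₀√δ ≤ 1 and M δ ≤ 1, F(δ) ≤ C δ³. -/

import Mathlib

set_option maxHeartbeats 1000000

-- 2*(i+2)^2 ≤ 9*2^i for all naturals i (stated over ℝ)
lemma aux_sq (i : ℕ) : 2 * ((i:ℝ) + 2) ^ 2 ≤ 9 * (2:ℝ) ^ i := by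
  rcases Nat.eq_zero_or_pos i with rfl | hi
  · norm_num
  · induction i, hi using Nat.le_induction with
    | base => norm_num
    | succ k hk ih =>
      have hk1 : (1:ℝ) ≤ (k:ℝ) := by exact_mod_cast hk
      have h2 : 2 * ((k:ℝ) + 1 + 2) ^ 2 ≤ 2 * (2 * ((k:ℝ) + 2) ^ 2) := by nlinarith
      calc 2 * (((k + 1 : ℕ):ℝ) + 2) ^ 2 = 2 * ((k:ℝ) + 1 + 2) ^ 2 := by push_cast; ring
        _ ≤ 2 * (2 * ((k:ℝ) + 2) ^ 2) := h2
        _ ≤ 2 * (9 * (2:ℝ) ^ k) := by linarith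
        _ = 9 * (2:ℝ) ^ (k + 1) := by ring

-- n^8 ≤ 411 * 4^n
lemma aux_pow8 (n : ℕ) : n ^ 8 ≤ 411 * 4 ^ n := by
  rcases le_or_gt n 6 with h | h
  · interval_cases n <;> norm_num
  · obtain ⟨m, rfl⟩ : ∃ m, n = m + 7 := ⟨n - 7, by omega⟩
    clear h
    induction m with
    | zero => norm_num
    | succ k ih =>
      have key : (k + 8) ^ 8 ≤ 4 * (k + 7) ^ 8 := by
        have h1 : 6 * (k + 8) ≤ 7 * (k + 7) := by omega
        have h3 : 6 ^ 8 * (k + 8) ^ 8 ≤ 7 ^ 8 * (k + 7) ^ 8 := by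
          calc 6 ^ 8 * (k + 8) ^ 8 = (6 * (k + 8)) ^ 8 := by rw [mul_pow]
            _ ≤ (7 * (k + 7)) ^ 8 := Nat.pow_le_pow_left h1 8
            _ = 7 ^ 8 * (k + 7) ^ 8 := by rw [mul_pow]
        have h5 : 6 ^ 8 * (k + 8) ^ 8 ≤ 6 ^ 8 * (4 * (k + 7) ^ 8) := by
          calc 6 ^ 8 * (k + 8) ^ 8 ≤ 7 ^ 8 * (k + 7) ^ 8 := h3
            _ ≤ (4 * 6 ^ 8) * (k + 7) ^ 8 := Nat.mul_le_mul_right _ (by norm_num)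
            _ = 6 ^ 8 * (4 * (k + 7) ^ 8) := by ring
        exact Nat.le_of_mul_le_mul_left h5 (by norm_num)
      calc (k + 1 + 7) ^ 8 = (k + 8) ^ 8 := by ring_nf
        _ ≤ 4 * (k + 7) ^ 8 := key
        _ ≤ 4 * (411 * 4 ^ (k + 7)) := by omega
        _ = 411 * 4 ^ (k + 1 + 7) := by ring

/-- Abstract iteration lemma: if a nonnegative nondecreasing `F` satisfies
`F(t) ≤ (c₀δ/(s−t))² F(s) + C₀((s−t)² + δ²) s²/δ` for all `0 < t < s` and is globally
bounded by `M`, then (with `C = C(c₀, C₀)`), provided `4c₀√δ ≤ 1` and `Mδ ≤ 1`,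
one has `F(δ) ≤ C δ³`. -/
theorem stmt_8 (c₀ C₀ : ℝ) (hc₀ : 0 < c₀) (hC₀ : 0 < C₀) :
    ∃ C > 0, ∀ (δ M : ℝ) (F : ℝ → ℝ), 0 < δ →
      (∀ t, 0 ≤ F t) →
      MonotoneOn F (Set.Ici (0 : ℝ)) →
      (∀ t s : ℝ, 0 < t → t < s →
        F t ≤ (c₀ * δ / (s - t)) ^ 2 * F s + C₀ * ((s - t) ^ 2 + δ ^ 2) * s ^ 2 / δ) →
      (∀ s, F s ≤ M) →
      4 * c₀ * Real.sqrt δ ≤ 1 → M * δ ≤ 1 →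
      F δ ≤ C * δ ^ 3 := by
  refine ⟨411 * (4 * c₀) ^ 8 + 18 * (C₀ * (4 * c₀ ^ 2 + 1) * (1 + 2 * c₀) ^ 2),
    by positivity, ?_⟩
  intro δ M F hδ hF0 _hmono hF hFM hsq hMδ
  set K : ℝ := C₀ * (4 * c₀ ^ 2 + 1) * (1 + 2 * c₀) ^ 2 with hKdef
  have hK : 0 < K := by positivity
  have hδ3 : 0 < δ ^ 3 := by positivity
  -- main induction
  have key : ∀ i : ℕ, F δ ≤ (1/4) ^ i * F (δ * (1 + 2 * c₀ * i)) +
      K * δ ^ 3 * (18 - 9 * (1/2) ^ i) := by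
    intro i
    induction i with
    | zero =>
      simp only [pow_zero, one_mul, Nat.cast_zero, mul_zero, add_zero, mul_one]
      nlinarith
    | succ j ih =>
      have ht : 0 < δ * (1 + 2 * c₀ * j) := by positivity
      have hlt : δ * (1 + 2 * c₀ * j) < δ * (1 + 2 * c₀ * ((j:ℝ) + 1)) := by nlinarith
      have h1 := hF _ _ ht hlt
      have hdiff : δ * (1 + 2 * c₀ * ((j:ℝ) + 1)) - δ * (1 + 2 * c₀ * j) = 2 * c₀ * δ := by
        ring
      rw [hdiff] at h1
      have hq : (c₀ * δ / (2 * c₀ * δ)) ^ 2 = 1/4 := by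
        rw [div_pow, div_eq_iff (by positivity)]
        ring
      rw [hq] at h1
      -- bound the additive term
      have ht1 : δ * (1 + 2 * c₀ * ((j:ℝ) + 1)) ≤ δ * ((1 + 2 * c₀) * ((j:ℝ) + 2)) := by
        have : (0:ℝ) ≤ (j:ℝ) := Nat.cast_nonneg j
        nlinarith
      have hsq1 : (δ * (1 + 2 * c₀ * ((j:ℝ) + 1))) ^ 2 ≤ (δ * ((1 + 2 * c₀) * ((j:ℝ) + 2))) ^ 2 :=
        pow_le_pow_left₀ (by positivity) ht1 2
      have hterm : C₀ * ((2 * c₀ * δ) ^ 2 + δ ^ 2) * (δ * (1 + 2 * c₀ * ((j:ℝ) + 1))) ^ 2 / δ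
          ≤ K * δ ^ 3 * ((j:ℝ) + 2) ^ 2 := by
        rw [div_le_iff₀ hδ]
        have e2 := mul_le_mul_of_nonneg_left hsq1
          (show (0:ℝ) ≤ C₀ * (4 * c₀ ^ 2 + 1) * δ ^ 2 by positivity)
        have e1 : C₀ * ((2 * c₀ * δ) ^ 2 + δ ^ 2) * (δ * (1 + 2 * c₀ * ((j:ℝ) + 1))) ^ 2
            = (C₀ * (4 * c₀ ^ 2 + 1) * δ ^ 2) * (δ * (1 + 2 * c₀ * ((j:ℝ) + 1))) ^ 2 := by ring
        have e3 : (C₀ * (4 * c₀ ^ 2 + 1) * δ ^ 2) * (δ * ((1 + 2 * c₀) * ((j:ℝ) + 2))) ^ 2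
            = K * δ ^ 3 * ((j:ℝ) + 2) ^ 2 * δ := by rw [hKdef]; ring
        linarith [e1 ▸ e3 ▸ e2]
      have h2 : F (δ * (1 + 2 * c₀ * (j:ℝ))) ≤
          (1/4) * F (δ * (1 + 2 * c₀ * ((j:ℝ) + 1))) + K * δ ^ 3 * ((j:ℝ) + 2) ^ 2 :=
        h1.trans (by linarith)
      -- arithmetic with powers
      have haux : 2 * ((j:ℝ) + 2) ^ 2 ≤ 9 * (2:ℝ) ^ j := aux_sq j
      have hstep : ((1/4:ℝ)) ^ j * ((j:ℝ) + 2) ^ 2 ≤ (9/2) * (1/2) ^ j := by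
        have h4 : ((1/4:ℝ)) ^ j = (1/2) ^ j * (1/2) ^ j := by
          rw [← mul_pow]; norm_num
        rw [h4]
        have hmain : ((1/2:ℝ)) ^ j * ((j:ℝ) + 2) ^ 2 ≤ 9/2 := by
          have h2p : (0:ℝ) < (2:ℝ) ^ j := by positivity
          rw [show ((1/2:ℝ)) ^ j = ((2:ℝ) ^ j)⁻¹ by rw [← inv_pow]; norm_num,
            inv_mul_le_iff₀ h2p]
          linarith
        have hhalf : (0:ℝ) ≤ (1/2 : ℝ) ^ j := by positivity
        calc (1/2:ℝ) ^ j * (1/2) ^ j * ((j:ℝ) + 2) ^ 2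
            = (1/2) ^ j * ((1/2) ^ j * ((j:ℝ) + 2) ^ 2) := by ring
          _ ≤ (1/2) ^ j * (9/2) := mul_le_mul_of_nonneg_left hmain hhalf
          _ = (9/2) * (1/2) ^ j := by ring
      have hpos4 : (0:ℝ) ≤ (1/4 : ℝ) ^ j := by positivity
      calc F δ ≤ (1/4) ^ j * F (δ * (1 + 2 * c₀ * j)) + K * δ ^ 3 * (18 - 9 * (1/2) ^ j) := ih
        _ ≤ (1/4) ^ j * ((1/4) * F (δ * (1 + 2 * c₀ * ((j:ℝ) + 1))) + K * δ ^ 3 * ((j:ℝ) + 2) ^ 2)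
            + K * δ ^ 3 * (18 - 9 * (1/2) ^ j) := by
              have := mul_le_mul_of_nonneg_left h2 hpos4
              linarith
        _ = (1/4) ^ (j+1) * F (δ * (1 + 2 * c₀ * ((j:ℝ) + 1)))
            + K * δ ^ 3 * ((1/4) ^ j * ((j:ℝ) + 2) ^ 2 + 18 - 9 * (1/2) ^ j) := by
              rw [pow_succ]; ring
        _ ≤ (1/4) ^ (j+1) * F (δ * (1 + 2 * c₀ * ((j:ℝ) + 1)))
            + K * δ ^ 3 * (18 - 9 * (1/2) ^ (j+1)) := by
              have hc : (1/4:ℝ) ^ j * ((j:ℝ) + 2) ^ 2 + 18 - 9 * (1/2) ^ j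
                  ≤ 18 - 9 * (1/2) ^ (j+1) := by
                linarith [pow_succ (1/2:ℝ) j, hstep]
              have hKd : (0:ℝ) ≤ K * δ ^ 3 := by positivity
              linarith [mul_le_mul_of_nonneg_left hc hKd]
        _ = (1/4) ^ (j+1) * F (δ * (1 + 2 * c₀ * ((j+1 : ℕ):ℝ)))
            + K * δ ^ 3 * (18 - 9 * (1/2) ^ (j+1)) := by push_cast; ring_nf
  -- tail estimate
  have hs : 0 < Real.sqrt δ := Real.sqrt_pos.2 hδ
  set n : ℕ := ⌈1 / (4 * c₀ * Real.sqrt δ)⌉₊ with hndef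
  have hpos : (0:ℝ) < 1 / (4 * c₀ * Real.sqrt δ) := by positivity
  have hn1 : 1 ≤ n := by
    have := Nat.ceil_pos.mpr hpos
    omega
  have hnge : 1 / (4 * c₀ * Real.sqrt δ) ≤ (n:ℝ) := Nat.le_ceil _
  have hnpos : (0:ℝ) < (n:ℝ) := by exact_mod_cast hn1
  have hM0 : 0 ≤ M := (hF0 0).trans (hFM 0)
  have hM1 : M ≤ 1 / δ := by
    rw [le_div_iff₀ hδ]; linarith
  have h1le : (1:ℝ) ≤ 4 * c₀ * Real.sqrt δ * n := by
    rw [div_le_iff₀ (by positivity)] at hnge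
    linarith
  have hδ4 : (1:ℝ) ≤ (4 * c₀) ^ 8 * δ ^ 4 * (n:ℝ) ^ 8 := by
    have h8 : (1:ℝ) ≤ (4 * c₀ * Real.sqrt δ * n) ^ 8 := one_le_pow₀ h1le
    have hsq8 : Real.sqrt δ ^ 8 = δ ^ 4 := by
      rw [show (8:ℕ) = 2 * 4 from rfl, pow_mul, Real.sq_sqrt hδ.le]
    calc (1:ℝ) ≤ (4 * c₀ * Real.sqrt δ * n) ^ 8 := h8
      _ = (4 * c₀) ^ 8 * Real.sqrt δ ^ 8 * (n:ℝ) ^ 8 := by ring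
      _ = (4 * c₀) ^ 8 * δ ^ 4 * (n:ℝ) ^ 8 := by rw [hsq8]
  have hpow8 : ((n:ℝ)) ^ 8 ≤ 411 * (4:ℝ) ^ n := by
    exact_mod_cast Nat.cast_le (α := ℝ).mpr (aux_pow8 n)
  have htail : (1/4:ℝ) ^ n * M ≤ 411 * (4 * c₀) ^ 8 * δ ^ 3 := by
    have h4n : (0:ℝ) < (4:ℝ) ^ n := by positivity
    have hq : (1/4:ℝ) ^ n = ((4:ℝ) ^ n)⁻¹ := by rw [← inv_pow]; norm_num
    have h1 : (1/4:ℝ) ^ n * M ≤ ((4:ℝ) ^ n)⁻¹ * (1/δ) := by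
      rw [hq]
      exact mul_le_mul_of_nonneg_left hM1 (by positivity)
    refine h1.trans ?_
    have h2 : (1:ℝ) ≤ 411 * (4 * c₀) ^ 8 * δ ^ 4 * (4:ℝ) ^ n := by
      calc (1:ℝ) ≤ (4 * c₀) ^ 8 * δ ^ 4 * (n:ℝ) ^ 8 := hδ4
        _ ≤ (4 * c₀) ^ 8 * δ ^ 4 * (411 * (4:ℝ) ^ n) := by
            exact mul_le_mul_of_nonneg_left hpow8 (by positivity)
        _ = 411 * (4 * c₀) ^ 8 * δ ^ 4 * (4:ℝ) ^ n := by ring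
    rw [show ((4:ℝ) ^ n)⁻¹ * (1/δ) = 1 / ((4:ℝ) ^ n * δ) by ring,
      div_le_iff₀ (by positivity)]
    calc (1:ℝ) ≤ 411 * (4 * c₀) ^ 8 * δ ^ 4 * (4:ℝ) ^ n := h2
      _ = 411 * (4 * c₀) ^ 8 * δ ^ 3 * ((4:ℝ) ^ n * δ) := by ring
  -- conclude
  have hkn := key n
  have hFtn : F (δ * (1 + 2 * c₀ * n)) ≤ M := hFM _
  have hp4 : (0:ℝ) ≤ (1/4:ℝ) ^ n := by positivity
  have hhn : (0:ℝ) ≤ (1/2:ℝ) ^ n := by positivity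
  calc F δ ≤ (1/4) ^ n * F (δ * (1 + 2 * c₀ * n)) + K * δ ^ 3 * (18 - 9 * (1/2) ^ n) := hkn
    _ ≤ (1/4) ^ n * M + K * δ ^ 3 * 18 := by
        have h9 : (0:ℝ) ≤ K * δ ^ 3 * (1/2) ^ n := by positivity
        linarith [mul_le_mul_of_nonneg_left hFtn hp4, h9]
    _ ≤ 411 * (4 * c₀) ^ 8 * δ ^ 3 + 18 * K * δ ^ 3 := by linarith
    _ = (411 * (4 * c₀) ^ 8 + 18 * K) * δ ^ 3 := by ring
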